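/- For every real α < 1, every real γ, every natural number n, and every real number y: (yα − γ)_{n↑} = ∑_{k=0}^{n} S_{n,k}^{-1,-α,γ} · (yα)_{k↑α}, i.e. the non-central generalized Stirling numbers defined by the convolution formula are the connection coefficients between the shifted rising factorials (yα − γ)_{n↑} and the α-increment rising factorials (yα)_{k↑α}. -/

import Mathlib

/-- Generalized rising factorial `(x)_{n↑h} = ∏_{i=0}^{n-1} (x + i·h)`. -/
noncomputable def risefac (x h : ℝ) (n : ℕ) : ℝ := ∏ i ∈ Finset.range n, (x + i * h)

open Finset PowerSeries


lemma risefac_zero (x h : ℝ) : risefac x h 0 = 1 := by simp [risefac]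

lemma risefac_succ (x h : ℝ) (n : ℕ) :
    risefac x h (n + 1) = risefac x h n * (x + n * h) := by
  simp [risefac, Finset.prod_range_succ]


lemma coeff_pow_tuple (φ : ℝ⟦X⟧) (k n : ℕ) :
    (coeff n) (φ ^ k) = ∑ f ∈ Finset.Nat.antidiagonalTuple k n, ∏ j, coeff (f j) φ := by
  induction k generalizing n with
  | zero =>
    cases n with
    | zero => simp
    | succ n => simp
  | succ k ih =>
    rw [pow_succ', coeff_mul,
      Finset.sum_congr rfl (fun p (_ : p ∈ antidiagonal n) => by rw [ih, Finset.mul_sum]),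
      Finset.sum_congr rfl (fun p (_ : p ∈ antidiagonal n) => rfl)]
    refine Eq.trans (Finset.sum_sigma (antidiagonal n)
      (fun p => Finset.Nat.antidiagonalTuple k p.2)
      (fun x => coeff x.1.1 φ * ∏ j, coeff (x.2 j) φ)).symm ?_
    refine Finset.sum_nbij' (i := fun x => Fin.cons x.1.1 x.2)
      (j := fun g => ⟨(g 0, ∑ i : Fin k, g i.succ), Fin.tail g⟩) ?_ ?_ ?_ ?_ ?_
    · rintro ⟨⟨a, m⟩, f⟩ hx
      simp only [Finset.mem_sigma, Finset.HasAntidiagonal.mem_antidiagonal,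
        Finset.Nat.mem_antidiagonalTuple] at hx ⊢
      rw [Fin.sum_cons, hx.2, hx.1]
    · intro g hg
      simp only [Finset.Nat.mem_antidiagonalTuple, Finset.mem_sigma,
        Finset.HasAntidiagonal.mem_antidiagonal] at hg ⊢
      exact ⟨by rw [← hg, Fin.sum_univ_succ], rfl⟩
    · rintro ⟨⟨a, m⟩, f⟩ hx
      simp only [Finset.mem_sigma, Finset.HasAntidiagonal.mem_antidiagonal,
        Finset.Nat.mem_antidiagonalTuple] at hx
      refine Sigma.ext ?_ ?_
      · simp [Fin.cons_zero, Fin.tail_cons, hx.2]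
      · simp [Fin.tail_cons]
    · intro g hg
      simp [Fin.cons_self_tail]
    · rintro ⟨⟨a, m⟩, f⟩ hx
      simp [Fin.prod_univ_succ]

noncomputable def bb (α : ℝ) (m : ℕ) : ℝ :=
  if m = 0 then 0 else risefac (1 - α) 1 (m - 1) / m.factorial

noncomputable def FF (α : ℝ) : ℝ⟦X⟧ := PowerSeries.mk (bb α)

lemma coeff_FF (α : ℝ) (m : ℕ) : coeff m (FF α) = bb α m := coeff_mk m _

lemma bb_zero (α : ℝ) : bb α 0 = 0 := rfl

lemma bb_one (α : ℝ) : bb α 1 = 1 := by simp [bb, risefac]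

lemma bb_rec (α : ℝ) (m : ℕ) :
    ((m : ℝ) + 2) * bb α (m + 2) = ((m : ℝ) + 1 - α) * bb α (m + 1) := by
  simp only [bb, if_neg (Nat.succ_ne_zero _)]
  have h1 : (m + 2) - 1 = (m + 1 - 1) + 1 := rfl
  rw [h1, risefac_succ]
  have h2 : ((m + 2).factorial : ℝ) = ((m : ℝ) + 2) * (m + 1).factorial := by
    rw [Nat.factorial_succ]; push_cast; ring
  rw [h2]
  have h3 : ((m + 1).factorial : ℝ) ≠ 0 := Nat.cast_ne_zero.mpr (Nat.factorial_ne_zero _)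
  have h4 : ((m : ℝ) + 2) ≠ 0 := by positivity
  field_simp
  push_cast
  ring

lemma ode (α : ℝ) : (1 - X) * d⁄dX ℝ (FF α) = 1 - C α * FF α := by
  ext n
  rw [sub_mul, one_mul, map_sub, map_sub, coeff_C_mul, coeff_FF]
  cases n with
  | zero =>
    rw [coeff_zero_X_mul, coeff_derivative, coeff_FF, bb_one, coeff_one, bb_zero]
    norm_num
  | succ m =>
    rw [coeff_succ_X_mul, coeff_derivative, coeff_derivative, coeff_FF, coeff_FF, coeff_one,
      if_neg (Nat.succ_ne_zero m)]
    have := bb_rec α m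
    push_cast
    push_cast at this
    nlinarith [this]

lemma coeff_X_mul_derivative (g : ℝ⟦X⟧) (n : ℕ) :
    coeff n (X * d⁄dX ℝ g) = (n : ℝ) * coeff n g := by
  cases n with
  | zero => rw [coeff_zero_X_mul]; simp
  | succ m => rw [coeff_succ_X_mul, coeff_derivative]; push_cast; ring

lemma coeff_rec (α : ℝ) (n k : ℕ) :
    ((n : ℝ) + 1) * coeff (n + 1) (FF α ^ (k + 1)) =
      ((k : ℝ) + 1) * coeff n (FF α ^ k) +
        ((n : ℝ) - ((k : ℝ) + 1) * α) * coeff n (FF α ^ (k + 1)) := by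
  have hD : d⁄dX ℝ (FF α ^ (k + 1)) = (k + 1 : ℕ) • (FF α ^ k * d⁄dX ℝ (FF α)) := by
    rw [Derivation.leibniz_pow]
    simp [smul_smul, mul_comm, Nat.add_sub_cancel]
  have hF : d⁄dX ℝ (FF α) = 1 - C α * FF α + X * d⁄dX ℝ (FF α) := by
    have := ode α
    rw [sub_mul, one_mul] at this
    linear_combination (norm := ring_nf) this
  have key : d⁄dX ℝ (FF α ^ (k + 1)) =
      C ((k : ℝ) + 1) * FF α ^ k - C ((k : ℝ) + 1) * (C α * FF α ^ (k + 1)) +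
        X * d⁄dX ℝ (FF α ^ (k + 1)) := by
    have hD' : d⁄dX ℝ (FF α ^ (k + 1)) = C ((k : ℝ) + 1) * (FF α ^ k * d⁄dX ℝ (FF α)) := by
      rw [hD, nsmul_eq_mul]
      push_cast
      simp [map_add, map_natCast, map_one]
    linear_combination (1 - X) * hD' + (C ((k : ℝ) + 1) * FF α ^ k) * hF
  have h2 := congrArg (coeff n) key
  rw [coeff_derivative, map_add, map_sub, coeff_C_mul, coeff_C_mul, coeff_C_mul,
    coeff_X_mul_derivative] at h2
  linear_combination h2

/-- Generalized Stirling number `S_{n,k}^{-1,-α} = (n!/k!) ∑ ∏_j (1-α)_{n_j-1↑}/n_j!`,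
the sum over positive tuples `(n_1,…,n_k)` with sum `n`. -/
noncomputable def genStirling (α : ℝ) (n k : ℕ) : ℝ :=
  ((n.factorial : ℝ) / k.factorial) *
    ∑ f ∈ (Finset.Nat.antidiagonalTuple k n).filter (fun f => ∀ i, 0 < f i),
      ∏ j, risefac (1 - α) 1 (f j - 1) / (f j).factorial

/-- Non-central generalized Stirling number
`S_{n,k}^{-1,-α,γ} = ∑_{s=k}^n binom(n,s) S_{s,k}^{-1,-α} (−γ)_{n-s↑}`. -/
noncomputable def genStirlingNC (α γ : ℝ) (n k : ℕ) : ℝ :=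
  ∑ s ∈ Finset.Icc k n, (n.choose s : ℝ) * genStirling α s k * risefac (-γ) 1 (n - s)

lemma genStirling_eq (α : ℝ) (n k : ℕ) :
    genStirling α n k = ((n.factorial : ℝ) / k.factorial) * coeff n (FF α ^ k) := by
  rw [genStirling, coeff_pow_tuple]
  congr 1
  rw [eq_comm, ← Finset.sum_filter_add_sum_filter_not (Finset.Nat.antidiagonalTuple k n)
    (fun f => ∀ i, 0 < f i)]
  have h2 : ∑ f ∈ (Finset.Nat.antidiagonalTuple k n).filter (fun f => ¬ ∀ i, 0 < f i),
      ∏ j, coeff (f j) (FF α) = 0 := by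
    refine Finset.sum_eq_zero fun f hf => ?_
    rw [Finset.mem_filter, not_forall] at hf
    obtain ⟨i, hi⟩ := hf.2
    exact Finset.prod_eq_zero (Finset.mem_univ i)
      (by rw [coeff_FF, Nat.not_lt, Nat.le_zero] at *
          rw [hi, bb_zero])
  rw [h2, add_zero]
  refine Finset.sum_congr rfl fun f hf => Finset.prod_congr rfl fun j _ => ?_
  rw [Finset.mem_filter] at hf
  rw [coeff_FF, bb, if_neg (Nat.pos_iff_ne_zero.mp (hf.2 j))]

lemma genStirling_zero_zero (α : ℝ) : genStirling α 0 0 = 1 := by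
  rw [genStirling_eq]; simp

lemma genStirling_succ_zero (α : ℝ) (n : ℕ) : genStirling α (n + 1) 0 = 0 := by
  rw [genStirling_eq, pow_zero, coeff_one, if_neg (Nat.succ_ne_zero n)]; ring

lemma genStirling_eq_zero_of_lt (α : ℝ) {n k : ℕ} (h : n < k) : genStirling α n k = 0 := by
  have hX : (X : ℝ⟦X⟧) ∣ FF α := X_dvd_iff.mpr
    (by rw [← coeff_zero_eq_constantCoeff, coeff_FF, bb_zero])
  have hd : (X : ℝ⟦X⟧) ^ k ∣ FF α ^ k := pow_dvd_pow_of_dvd hX k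
  rw [genStirling_eq, X_pow_dvd_iff.mp hd n h]; ring

lemma genStirling_rec (α : ℝ) (n k : ℕ) :
    genStirling α (n + 1) (k + 1) =
      genStirling α n k + ((n : ℝ) - ((k : ℝ) + 1) * α) * genStirling α n (k + 1) := by
  have h := coeff_rec α n k
  rw [genStirling_eq, genStirling_eq, genStirling_eq]
  have hn : (((n+1).factorial : ℕ) : ℝ) = ((n:ℝ)+1) * n.factorial := by
    rw [Nat.factorial_succ]; push_cast; ring
  have hk : (((k+1).factorial : ℕ) : ℝ) = ((k:ℝ)+1) * k.factorial := by
    rw [Nat.factorial_succ]; push_cast; ring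
  rw [hn, hk]
  have h1 : (k.factorial : ℝ) ≠ 0 := Nat.cast_ne_zero.mpr k.factorial_ne_zero
  have h2 : ((k:ℝ)+1) ≠ 0 := by positivity
  set d := (n.factorial : ℝ) / (((k:ℝ)+1) * (k.factorial:ℝ)) with hd
  have hd1 : ((n:ℝ)+1) * (n.factorial:ℝ) / (((k:ℝ)+1) * (k.factorial:ℝ)) = ((n:ℝ)+1) * d := by
    rw [hd]; ring
  have hd2 : (n.factorial : ℝ) / (k.factorial:ℝ) = ((k:ℝ)+1) * d := by
    rw [hd]; field_simp
  rw [hd1, hd2]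
  linear_combination d * h

/-- Vandermonde convolution for rising factorials. -/
lemma risefac_add (a b : ℝ) (n : ℕ) :
    risefac (a + b) 1 n = ∑ ij ∈ antidiagonal n,
      (n.choose ij.1 : ℝ) * (risefac a 1 ij.1 * risefac b 1 ij.2) := by
  induction n with
  | zero => simp [risefac]
  | succ n ih =>
    rw [risefac_succ, ih, Finset.sum_antidiagonal_choose_succ_mul
      (fun i j => risefac a 1 i * risefac b 1 j) n, Finset.sum_mul, ← Finset.sum_add_distrib]
    refine Finset.sum_congr rfl fun ij hij => ?_
    have h1 : ij.1 + ij.2 = n := Finset.HasAntidiagonal.mem_antidiagonal.mp hij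
    have h2 : (n.choose ij.2 : ℝ) = n.choose ij.1 := by
      rw [← Nat.choose_symm_of_eq_add h1.symm]
    rw [risefac_succ, risefac_succ, h2]
    have : a + b + (n : ℝ) * 1 = (a + ij.1 * 1) + (b + ij.2 * 1) := by
      have : ((ij.1 : ℝ) + ij.2) = n := by exact_mod_cast congrArg (Nat.cast : ℕ → ℝ) h1
      ring_nf
      linarith [this]
    rw [this]
    ring

lemma central (α : ℝ) (n : ℕ) (x : ℝ) :
    risefac x 1 n = ∑ k ∈ range (n + 1), genStirling α n k * risefac x α k := by
  induction n with
  | zero => simp [risefac_zero, genStirling_zero_zero]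
  | succ n ih =>
    have lhs1 : risefac x 1 (n+1) = ∑ k ∈ range (n+1),
        (genStirling α n k * risefac x α (k+1)
          + ((n:ℝ) - (k:ℝ)*α) * (genStirling α n k * risefac x α k)) := by
      rw [risefac_succ, ih, Finset.sum_mul]
      exact Finset.sum_congr rfl fun k _ => by rw [risefac_succ]; ring
    have rhs1 : ∑ k ∈ range (n+1+1), genStirling α (n+1) k * risefac x α k
        = ∑ k ∈ range (n+1),
          (genStirling α n k * risefac x α (k+1)
            + ((n:ℝ) - ((k:ℝ)+1)*α) * (genStirling α n (k+1) * risefac x α (k+1))) := by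
      rw [Finset.sum_range_succ' (fun k => genStirling α (n+1) k * risefac x α k) (n+1),
        genStirling_succ_zero, zero_mul, add_zero]
      exact Finset.sum_congr rfl fun k _ => by rw [genStirling_rec]; ring
    rw [lhs1, rhs1, Finset.sum_add_distrib, Finset.sum_add_distrib]
    congr 1
    -- shift the index by one
    have e1 := Finset.sum_range_succ'
      (fun k => ((n:ℝ) - (k:ℝ)*α) * (genStirling α n k * risefac x α k)) (n+1)
    have e2 := Finset.sum_range_succ
      (fun k => ((n:ℝ) - (k:ℝ)*α) * (genStirling α n k * risefac x α k)) (n+1)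
    simp only [Nat.cast_zero, zero_mul, sub_zero, Nat.cast_add, Nat.cast_one] at e1 e2
    have h0 : (n:ℝ) * (genStirling α n 0 * risefac x α 0) = 0 := by
      cases n with
      | zero => simp
      | succ m => rw [genStirling_succ_zero]; ring
    have hn1 : ((n:ℝ) - ((n:ℝ)+1)*α) * (genStirling α n (n+1) * risefac x α (n+1)) = 0 := by
      rw [genStirling_eq_zero_of_lt α (Nat.lt_succ_self n)]; ring
    rw [h0, add_zero] at e1
    rw [hn1, add_zero] at e2
    rw [← e2, e1]

/-- `(yα − γ)_{n↑} = ∑_{k=0}^n S_{n,k}^{-1,-α,γ} (yα)_{k↑α}`: the non-central generalized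
Stirling numbers are the connection coefficients between the shifted rising factorials
and the α-increment rising factorials. -/
theorem risefac_eq_sum_genStirlingNC (α : ℝ) (hα : α < 1) (γ : ℝ) (n : ℕ) (y : ℝ) :
    risefac (y * α - γ) 1 n =
      ∑ k ∈ Finset.range (n + 1), genStirlingNC α γ n k * risefac (y * α) α k := by
  have h1 : risefac (y * α - γ) 1 n = ∑ ij ∈ antidiagonal n,
      (n.choose ij.1 : ℝ) * (risefac (y*α) 1 ij.1 * risefac (-γ) 1 ij.2) := by
    rw [show y * α - γ = y * α + (-γ) by ring, risefac_add]
  rw [h1, Finset.Nat.sum_antidiagonal_eq_sum_range_succ_mk]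
  simp only [central α _ (y*α), Finset.sum_mul, Finset.mul_sum]
  rw [Finset.sum_comm' (t' := range (n+1)) (s' := fun k => Finset.Icc k n)
    (by intro s k; simp only [Finset.mem_range, Finset.mem_Icc, Nat.lt_succ_iff]; omega)]
  refine Finset.sum_congr rfl fun k _ => ?_
  rw [genStirlingNC, Finset.sum_mul]
  refine Finset.sum_congr rfl fun s _ => ?_
  ring
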